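/- arXiv:1505.07891 — 4 statements merged into one kernel-verified Lean document; each statement's English description precedes it below -/
import Mathlib

section
/- The formal derivative of F(z) = ∑_{m=0}^{p-1} C(c,m)(g(z)-1)^m satisfies F'(z) = V(z) - ∑_{j=1}^n (c·x_j/(1 - x_j z))·F(z), where V(z) = ∑_j (x_j/(1 - x_j z))·c·C(c-1, p-1)·(g(z)-1)^{p-1}; moreover the coefficient of z^l in V(z) is zero for 0 ≤ l ≤ p-1. -/
open PowerSeries Finset

lemma aux_deriv_prod {R B : Type*} [CommRing R] [CommRing B] [Algebra R B]
    (D : Derivation R B B) {ι : Type*} [DecidableEq ι] (s : Finset ι) (f : ι → B) :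
    D (∏ j ∈ s, f j) = ∑ j ∈ s, (∏ i ∈ s.erase j, f i) * D (f j) := by
  induction s using Finset.induction_on with
  | empty => simp
  | @insert a s ha ih =>
    rw [Finset.prod_insert ha, D.leibniz, ih, Finset.sum_insert ha, smul_eq_mul, smul_eq_mul,
      Finset.erase_insert ha, Finset.mul_sum]
    rw [add_comm]
    congr 1
    · apply Finset.sum_congr rfl
      intro j hj
      rw [Finset.erase_insert_of_ne (by rintro rfl; exact ha hj),
        Finset.prod_insert (fun h => ha (Finset.mem_of_mem_erase h))]
      ring

lemma aux_inv {R : Type*} [CommRing R] (a : R) :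
    (1 - PowerSeries.C a * PowerSeries.X) * PowerSeries.mk (fun l => a ^ l) = 1 := by
  ext n
  rw [sub_mul, one_mul, map_sub, mul_assoc]
  cases n with
  | zero => simp
  | succ m => simp [coeff_succ_X_mul, coeff_mk, pow_succ']

lemma aux_coeff1 {R : Type*} [CommRing R] {ι : Type*} [DecidableEq ι] (s : Finset ι) (a : ι → R) :
    PowerSeries.coeff 1 (∏ j ∈ s, (1 - PowerSeries.C (a j) * PowerSeries.X)) =
      -∑ j ∈ s, a j := by
  induction s using Finset.induction_on with
  | empty => simp
  | @insert b s hb ih =>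
    rw [Finset.prod_insert hb, coeff_one_mul, ih, Finset.sum_insert hb]
    have h0 : constantCoeff (∏ j ∈ s, (1 - PowerSeries.C (a j) * PowerSeries.X)) = 1 := by
      rw [map_prod]; simp
    simp [h0]
    ring

section karith
variable {k : Type*} [Field k] {p : ℕ}

lemma aux_fact_ne [CharP k p] (hp : p.Prime) {m : ℕ} (hm : m < p) :
    ((m.factorial : ℕ) : k) ≠ 0 := by
  rw [Ne, CharP.cast_eq_zero_iff k p]
  intro h
  exact absurd ((Nat.Prime.dvd_factorial hp).mp h) (by omega)

lemma aux_cast_ne [CharP k p] (_hp : p.Prime) {m : ℕ} (hm0 : 0 < m) (hm : m < p) :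
    ((m : ℕ) : k) ≠ 0 := by
  rw [Ne, CharP.cast_eq_zero_iff k p]
  intro h
  exact absurd (Nat.le_of_dvd hm0 h) (by omega)

lemma aux_prodshift (c : k) (m : ℕ) :
    ∏ i ∈ range (m + 1), (c - (i : k)) = c * ∏ i ∈ range m, (c - 1 - (i : k)) := by
  rw [Finset.prod_range_succ']
  simp only [Nat.cast_zero, sub_zero, Nat.cast_succ]
  rw [mul_comm]
  congr 1
  exact Finset.prod_congr rfl fun i _ => by ring

lemma aux_key1 [CharP k p] (hp : p.Prime) (c : k) (m : ℕ) (hm : m + 1 < p) :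
    (((m + 1 : ℕ)) : k) * ((((m + 1).factorial : ℕ) : k)⁻¹ * ∏ i ∈ range (m + 1), (c - (i : k)))
      = c * (((m.factorial : ℕ) : k)⁻¹ * ∏ i ∈ range m, (c - 1 - (i : k))) := by
  have hf : ((m.factorial : ℕ) : k) ≠ 0 := aux_fact_ne hp (by omega)
  have hm1 : (((m + 1 : ℕ)) : k) ≠ 0 := aux_cast_ne hp (by omega) (by omega)
  have hm1' : (m : k) + 1 ≠ 0 := by push_cast at hm1; exact hm1
  rw [aux_prodshift, Nat.factorial_succ]
  push_cast
  field_simp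

lemma aux_pascal [CharP k p] (hp : p.Prime) (c : k) (m : ℕ) (hm : m + 1 < p) :
    (((m + 1).factorial : ℕ) : k)⁻¹ * ∏ i ∈ range (m + 1), (c - (i : k))
      = (((m + 1).factorial : ℕ) : k)⁻¹ * ∏ i ∈ range (m + 1), (c - 1 - (i : k))
        + ((m.factorial : ℕ) : k)⁻¹ * ∏ i ∈ range m, (c - 1 - (i : k)) := by
  have hf : ((m.factorial : ℕ) : k) ≠ 0 := aux_fact_ne hp (by omega)
  have hm1 : (((m + 1 : ℕ)) : k) ≠ 0 := aux_cast_ne hp (by omega) (by omega)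
  have hm1' : (m : k) + 1 ≠ 0 := by push_cast at hm1; exact hm1
  rw [aux_prodshift, Nat.factorial_succ, Finset.prod_range_succ]
  push_cast
  field_simp
  ring

end karith

set_option maxHeartbeats 1000000 in
set_option synthInstance.maxHeartbeats 400000 in
/-- With `F(z) = ∑_{m=0}^{p-1} C(c,m)(g(z)-1)^m` over
`A = k[x_1,…,x_n]/(x_1+⋯+x_n)`, the formal derivative satisfies
`F'(z) = V(z) - ∑_j (c x_j/(1-x_j z)) F(z)` where
`V(z) = (∑_j x_j/(1-x_j z)) · c · C(c-1,p-1) · (g(z)-1)^{p-1}`, and the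
coefficient of `z^l` in `V(z)` vanishes for `0 ≤ l ≤ p-1`. -/
theorem stmt11 (p n : ℕ) (hp : p.Prime) (k : Type*) [Field k] [CharP k p]
    (hn : 0 < n) (hpn : p ∣ n) (c : k) :
    let A := MvPolynomial (Fin n) k ⧸
      Ideal.span {(∑ i, MvPolynomial.X i : MvPolynomial (Fin n) k)}
    let x : Fin n → A := fun i => Ideal.Quotient.mk _ (MvPolynomial.X i)
    let geom : A → PowerSeries A := fun a => PowerSeries.mk fun l => a ^ l
    let g : PowerSeries A := ∏ j, (1 - PowerSeries.C (x j) * PowerSeries.X)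
    let Cb : k → ℕ → k := fun a r =>
      ((r.factorial : k)⁻¹) * ∏ i ∈ Finset.range r, (a - (i : k))
    let F : PowerSeries A :=
      ∑ m ∈ Finset.range p, algebraMap k A (Cb c m) • (g - 1) ^ m
    let V : PowerSeries A :=
      algebraMap k A (c * Cb (c - 1) (p - 1)) •
        ((∑ j, PowerSeries.C (x j) * geom (x j)) * (g - 1) ^ (p - 1))
    PowerSeries.derivative A F =
        V - (algebraMap k A c • (∑ j, PowerSeries.C (x j) * geom (x j))) * F ∧
      ∀ l : ℕ, l ≤ p - 1 → PowerSeries.coeff l V = 0 := by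
  intro A x geom g Cb F V
  have p2 : 2 ≤ p := hp.two_le
  set S : PowerSeries A := ∑ j, PowerSeries.C (x j) * geom (x j) with hS
  set u : PowerSeries A := g - 1 with hu
  set φ : k →+* PowerSeries A := (PowerSeries.C (R := A)).comp (algebraMap k A) with hφ
  have hφapp : ∀ r : k, PowerSeries.C (algebraMap k A r) = φ r := fun r => rfl
  have hF : F = ∑ m ∈ Finset.range p, algebraMap k A (Cb c m) • u ^ m := rfl
  have hV : V = algebraMap k A (c * Cb (c - 1) (p - 1)) • (S * u ^ (p - 1)) := rfl
  have hCb : ∀ (a : k) (r : ℕ),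
      Cb a r = ((r.factorial : k)⁻¹) * ∏ i ∈ Finset.range r, (a - (i : k)) := fun a r => rfl
  have hg : g = ∏ j, (1 - PowerSeries.C (x j) * PowerSeries.X) := rfl
  have hgeom : ∀ a : A, geom a = PowerSeries.mk fun l => a ^ l := fun a => rfl
  -- inverse relation
  have hinv : ∀ j, (1 - PowerSeries.C (x j) * PowerSeries.X) * geom (x j) = 1 := by
    intro j; rw [hgeom]; exact aux_inv (x j)
  have hGe : ∀ j, g * geom (x j)
      = ∏ i ∈ Finset.univ.erase j, (1 - PowerSeries.C (x i) * PowerSeries.X) := by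
    intro j
    rw [hg, ← Finset.mul_prod_erase _ _ (Finset.mem_univ j), mul_comm (1 - _), mul_assoc,
      hinv j, mul_one]
  -- derivative of g
  have hdg : PowerSeries.derivative A g = -(S * g) := by
    rw [hg, aux_deriv_prod]
    have hD : ∀ j : Fin n, PowerSeries.derivative A (1 - PowerSeries.C (x j) * PowerSeries.X)
        = -(PowerSeries.C (x j)) := by
      intro j
      rw [map_sub, Derivation.leibniz]
      simp
    have step : ∀ j ∈ (Finset.univ : Finset (Fin n)),
        (∏ i ∈ Finset.univ.erase j, (1 - PowerSeries.C (x i) * PowerSeries.X)) *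
          PowerSeries.derivative A (1 - PowerSeries.C (x j) * PowerSeries.X)
        = -(PowerSeries.C (x j) * geom (x j) * g) := by
      intro j _
      rw [hD, ← hGe j]
      ring
    rw [Finset.sum_congr rfl step, Finset.sum_neg_distrib, hS, Finset.sum_mul]
  have hug : u + 1 = g := by rw [hu]; ring
  have hdu : PowerSeries.derivative A u = -(S * (u + 1)) := by
    rw [hu, map_sub, Derivation.map_one_eq_zero, sub_zero, hdg]
    ring
  -- key scalar lemmas specialized
  have hk1 : ∀ i : ℕ, i < p - 1 →
      ((i + 1 : ℕ) : k) * Cb c (i + 1) = c * Cb (c - 1) i := by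
    intro i hi
    rw [hCb, hCb]
    exact aux_key1 hp c i (by omega)
  have hk2 : ∀ i : ℕ, i < p - 1 → Cb c (i + 1) = Cb (c - 1) (i + 1) + Cb (c - 1) i := by
    intro i hi
    rw [hCb, hCb, hCb]
    exact aux_pascal hp c i (by omega)
  have hCb0 : ∀ a : k, Cb a 0 = 1 := by intro a; rw [hCb]; simp
  -- the sums
  set W : PowerSeries A := ∑ r ∈ Finset.range (p - 1), φ (c * Cb (c - 1) r) * u ^ r with hW
  set Y : PowerSeries A := ∑ m ∈ Finset.range p, φ (c * Cb c m) * u ^ m with hY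
  -- derivative of F
  have hdF : PowerSeries.derivative A F = -(S * ((u + 1) * W)) := by
    rw [hF, map_sum]
    have step : ∀ m ∈ Finset.range p,
        PowerSeries.derivative A (algebraMap k A (Cb c m) • u ^ m)
        = φ (Cb c m) * (((m : ℕ) : PowerSeries A) * (u ^ (m - 1) * (-(S * (u + 1))))) := by
      intro m _
      rw [Derivation.map_smul, Derivation.leibniz_pow, hdu, smul_eq_C_mul, hφapp,
        smul_eq_mul, nsmul_eq_mul]
    rw [Finset.sum_congr rfl step]
    conv_lhs => rw [show p = p - 1 + 1 from by omega]
    rw [Finset.sum_range_succ']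
    simp only [Nat.cast_zero, zero_mul, mul_zero, add_zero]
    have step2 : ∀ i ∈ Finset.range (p - 1),
        φ (Cb c (i + 1)) * (((i + 1 : ℕ) : PowerSeries A) * (u ^ (i + 1 - 1) * (-(S * (u + 1)))))
        = -(S * ((u + 1) * (φ (c * Cb (c - 1) i) * u ^ i))) := by
      intro i hi
      rw [Finset.mem_range] at hi
      have : ((i + 1 : ℕ) : PowerSeries A) * φ (Cb c (i + 1)) = φ (c * Cb (c - 1) i) := by
        rw [← map_natCast φ (i + 1), ← map_mul, hk1 i hi]
      rw [Nat.add_sub_cancel, ← this]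
      ring
    rw [Finset.sum_congr rfl step2, Finset.sum_neg_distrib, ← Finset.mul_sum, ← Finset.mul_sum]
  -- (c • S) * F = S * Y
  have hcF : (algebraMap k A c • S) * F = S * Y := by
    rw [hF, hY, Finset.mul_sum, Finset.mul_sum]
    apply Finset.sum_congr rfl
    intro m _
    rw [smul_eq_C_mul S, smul_eq_C_mul (u ^ m), hφapp, hφapp, map_mul φ c (Cb c m),
      mul_comm (φ c) S, mul_assoc S (φ c), mul_assoc (φ c) (φ (Cb c m))]
  -- telescoping identity
  have hYW : Y = W + u * W + φ (c * Cb (c - 1) (p - 1)) * u ^ (p - 1) := by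
    rw [hY]
    conv_lhs => rw [show p = p - 1 + 1 from by omega]
    rw [Finset.sum_range_succ']
    have step : ∀ i ∈ Finset.range (p - 1),
        φ (c * Cb c (i + 1)) * u ^ (i + 1)
        = φ (c * Cb (c - 1) (i + 1)) * u ^ (i + 1) + u * (φ (c * Cb (c - 1) i) * u ^ i) := by
      intro i hi
      rw [Finset.mem_range] at hi
      rw [hk2 i hi, mul_add, map_add, add_mul]
      congr 1
      rw [pow_succ']
      ring
    rw [Finset.sum_congr rfl step, Finset.sum_add_distrib]
    have h2 : ∑ i ∈ Finset.range (p - 1), u * (φ (c * Cb (c - 1) i) * u ^ i) = u * W := by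
      rw [hW, Finset.mul_sum]
    have h1 : (∑ i ∈ Finset.range (p - 1), φ (c * Cb (c - 1) (i + 1)) * u ^ (i + 1))
        + φ (c * Cb c 0) * u ^ 0
        = W + φ (c * Cb (c - 1) (p - 1)) * u ^ (p - 1) := by
      have e0 : Cb c 0 = Cb (c - 1) 0 := by rw [hCb0, hCb0]
      rw [e0, ← Finset.sum_range_succ' (fun m => φ (c * Cb (c - 1) m) * u ^ m),
        Finset.sum_range_succ, hW]
    calc (∑ i ∈ Finset.range (p - 1), φ (c * Cb (c - 1) (i + 1)) * u ^ (i + 1))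
          + (∑ i ∈ Finset.range (p - 1), u * (φ (c * Cb (c - 1) i) * u ^ i))
          + φ (c * Cb c 0) * u ^ 0
        = ((∑ i ∈ Finset.range (p - 1), φ (c * Cb (c - 1) (i + 1)) * u ^ (i + 1))
            + φ (c * Cb c 0) * u ^ 0) + u * W := by rw [h2]; ring
      _ = W + u * W + φ (c * Cb (c - 1) (p - 1)) * u ^ (p - 1) := by rw [h1]; ring
  constructor
  · rw [eq_sub_iff_add_eq, hdF, hcF, hV, smul_eq_C_mul, hφapp, hYW]
    ring
  · intro l hl
    rw [hV]
    rw [LinearMap.map_smul]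
    have h2 : (PowerSeries.X : PowerSeries A) ^ 2 ∣ u := by
      rw [PowerSeries.X_pow_dvd_iff]
      intro m hm
      interval_cases m
      · rw [hu]
        simp only [map_sub, PowerSeries.coeff_zero_eq_constantCoeff, map_one]
        rw [hg, map_prod]
        simp
      · rw [hu, map_sub, hg, aux_coeff1]
        have hx : (∑ j, x j) = 0 := by
          have : (∑ j, x j) = Ideal.Quotient.mk _ (∑ i, MvPolynomial.X i : MvPolynomial (Fin n) k) := by
            rw [map_sum]
          rw [this, Ideal.Quotient.eq_zero_iff_mem]
          exact Ideal.subset_span rfl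
        rw [hx]
        simp
    have hdvd : (PowerSeries.X : PowerSeries A) ^ (2 * (p - 1)) ∣ S * u ^ (p - 1) := by
      rw [pow_mul]
      exact Dvd.dvd.mul_left (pow_dvd_pow_of_dvd h2 _) S
    rw [PowerSeries.X_pow_dvd_iff.mp hdvd l (by omega)]
    simp
end

section
/- With F(z) = ∑_{m=0}^{p-1} C(c,m)(g(z)-1)^m, one has ∂_{y_2-y_1}(F(z)) = G(z) - (zc/(1 - x_2 z) - zc/(1 - x_1 z))·F(z), where G(z) = (zc/(1 - x_2 z) - zc/(1 - x_1 z))·C(c-1, p-1)·(g(z)-1)^{p-1}; moreover the coefficient of z^l in G(z) is zero for 0 ≤ l ≤ p. -/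
open PowerSeries Finset

noncomputable section
namespace Stmt13Aux

variable {k R : Type*} [CommRing k] [CommRing R] [Algebra k R]

/-- coefficientwise extension of a derivation to power series -/
def Dser (d : Derivation k R R) : Derivation k (PowerSeries R) (PowerSeries R) where
  toFun f := PowerSeries.mk fun l => d (PowerSeries.coeff (R := R) l f)
  map_add' f g := by ext l; simp
  map_smul' a f := by
    ext l
    simp [PowerSeries.coeff_smul]
  map_one_eq_zero' := by
    ext l
    simp [PowerSeries.coeff_one, apply_ite d]
  leibniz' f g := by
    ext l
    simp only [LinearMap.coe_mk, AddHom.coe_mk, PowerSeries.coeff_mk, smul_eq_mul,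
      PowerSeries.coeff_mul, map_sum, map_add]
    rw [show (∑ p ∈ antidiagonal l, PowerSeries.coeff (R := R) p.1 g * d (PowerSeries.coeff (R := R) p.2 f))
        = ∑ p ∈ antidiagonal l, PowerSeries.coeff (R := R) p.2 g * d (PowerSeries.coeff (R := R) p.1 f) from by
      rw [← Finset.HasAntidiagonal.map_swap_antidiagonal, Finset.sum_map]; simp]
    rw [← Finset.sum_add_distrib]
    refine Finset.sum_congr rfl fun p _ => ?_
    rw [d.leibniz]; simp only [smul_eq_mul]

@[simp] lemma coeff_Dser (d : Derivation k R R) (f : PowerSeries R) (l : ℕ) :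
    PowerSeries.coeff (R := R) l (Dser d f) = d (PowerSeries.coeff (R := R) l f) := by
  simp [Dser]

lemma Dser_C (d : Derivation k R R) (r : R) :
    Dser d (PowerSeries.C (R := R) r) = PowerSeries.C (R := R) (d r) := by
  ext l
  simp [PowerSeries.coeff_C, apply_ite d]

@[simp] lemma Dser_X (d : Derivation k R R) : Dser d (PowerSeries.X : PowerSeries R) = 0 := by
  ext l
  simp [PowerSeries.coeff_X, apply_ite d]

/-- derivation of a finite product -/
lemma derivation_map_prod {A : Type*} [CommRing A] [Algebra k A] (D : Derivation k A A)
    {ι : Type*} [DecidableEq ι] (s : Finset ι) (f : ι → A) :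
    D (∏ i ∈ s, f i) = ∑ i ∈ s, (∏ j ∈ s.erase i, f j) * D (f i) := by
  induction s using Finset.induction_on with
  | empty => simp
  | insert a s hx ih =>
      rw [Finset.prod_insert hx, D.leibniz, ih, smul_eq_mul, Finset.mul_sum,
        Finset.sum_insert hx, Finset.erase_insert hx, smul_eq_mul, add_comm]
      congr 1
      refine Finset.sum_congr rfl fun i hi => ?_
      rw [Finset.erase_insert_of_ne (fun hAi => hx (by rw [hAi]; exact hi)),
        Finset.prod_insert (fun hmem => hx (Finset.mem_of_mem_erase hmem))]
      ring

/-- the geometric series is inverse to 1 - aX -/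
lemma one_sub_mul_geom (a : R) :
    (1 - PowerSeries.C (R := R) a * PowerSeries.X) * (PowerSeries.mk fun l => a ^ l) = 1 := by
  ext l
  cases l with
  | zero => simp
  | succ m =>
      rw [sub_mul, one_mul, mul_assoc, map_sub, PowerSeries.coeff_C_mul,
        PowerSeries.coeff_succ_X_mul]
      simp [pow_succ, mul_comm]

section Main

variable {k : Type*} [Field k] {n : ℕ}

local notation "R" => MvPolynomial (Fin n) k

lemma part2 (p : ℕ) (hp : 1 ≤ p) (i₁ i₂ : Fin n) (c b : k) (l : ℕ) (hl : l ≤ p) :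
    PowerSeries.coeff l
      ((PowerSeries.X * PowerSeries.C (MvPolynomial.C c) *
          (PowerSeries.mk fun m => (MvPolynomial.X i₂ : R) ^ m)
        - PowerSeries.X * PowerSeries.C (MvPolynomial.C c) *
          (PowerSeries.mk fun m => (MvPolynomial.X i₁ : R) ^ m)) *
        ((MvPolynomial.C b : R) •
          ((∏ j, (1 - PowerSeries.C (MvPolynomial.X j) * PowerSeries.X)) - 1) ^ (p - 1))) = 0 := by
  set g : PowerSeries R := ∏ j, (1 - PowerSeries.C (MvPolynomial.X j) * PowerSeries.X) with hg
  set Cc : PowerSeries R := PowerSeries.C (MvPolynomial.C c) with hCc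
  set e₂ : PowerSeries R := PowerSeries.mk fun m => (MvPolynomial.X i₂ : R) ^ m with he₂
  set e₁ : PowerSeries R := PowerSeries.mk fun m => (MvPolynomial.X i₁ : R) ^ m with he₁
  have hgc : PowerSeries.constantCoeff g = 1 := by
    rw [hg, map_prod]
    refine Finset.prod_eq_one fun j _ => by simp
  have hw : (PowerSeries.X : PowerSeries R) ∣ (g - 1) := by
    rw [PowerSeries.X_dvd_iff, map_sub, hgc, map_one, sub_self]
  obtain ⟨s, hs⟩ : (PowerSeries.X : PowerSeries R) ^ (p - 1) ∣ (g - 1) ^ (p - 1) :=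
    pow_dvd_pow_of_dvd hw _
  obtain ⟨t, ht⟩ : (PowerSeries.X : PowerSeries R) ∣ (Cc * e₂ - Cc * e₁) := by
    rw [PowerSeries.X_dvd_iff, map_sub, map_mul, map_mul, hCc, PowerSeries.constantCoeff_C,
      he₂, he₁, PowerSeries.constantCoeff_mk, PowerSeries.constantCoeff_mk]
    simp
  have hdvd2 : (PowerSeries.X : PowerSeries R) ^ (2 + (p - 1)) ∣
      (PowerSeries.X * Cc * e₂ - PowerSeries.X * Cc * e₁) *
        ((MvPolynomial.C b : R) • (g - 1) ^ (p - 1)) := by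
    refine ⟨t * (PowerSeries.C (MvPolynomial.C b) * s), ?_⟩
    rw [PowerSeries.smul_eq_C_mul, hs,
      show PowerSeries.X * Cc * e₂ - PowerSeries.X * Cc * e₁
        = PowerSeries.X * (Cc * e₂ - Cc * e₁) from by ring, ht, pow_add]
    ring
  exact (PowerSeries.X_pow_dvd_iff.mp hdvd2) l (by omega)


lemma fact_ne_zero {p r : ℕ} (hp : p.Prime) [CharP k p] (hr : r < p) :
    ((r.factorial : k)) ≠ 0 := by
  rw [Ne, CharP.cast_eq_zero_iff k p]
  intro hdvd
  have := (Nat.Prime.dvd_factorial hp).mp hdvd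
  omega

lemma nat_ne_zero {p r : ℕ} (hp : p.Prime) [CharP k p] (h0 : 0 < r) (hr : r < p) :
    ((r : ℕ) : k) ≠ 0 := by
  rw [Ne, CharP.cast_eq_zero_iff k p]
  intro hdvd
  have := Nat.le_of_dvd h0 hdvd
  omega

lemma scalarA {p : ℕ} (hp : p.Prime) [CharP k p] (c : k) {j : ℕ} (hj : j + 1 < p) :
    ((j + 1 : ℕ) : k) * (((j+1).factorial : k)⁻¹ * ∏ i ∈ Finset.range (j+1), (c - (i : k)))
      = (c - (j : k)) * ((j.factorial : k)⁻¹ * ∏ i ∈ Finset.range j, (c - (i : k))) := by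
  have h1 : ((j.factorial : k)) ≠ 0 := fact_ne_zero hp (by omega)
  have h2 : (((j+1) : ℕ) : k) ≠ 0 := nat_ne_zero hp (by omega) hj
  have h3 : (((j+1).factorial : k)) = ((j+1 : ℕ) : k) * (j.factorial : k) := by
    rw [Nat.factorial_succ]; push_cast; ring
  rw [Finset.prod_range_succ, h3, mul_inv]
  calc ((j + 1 : ℕ) : k) * ((((j+1 : ℕ) : k))⁻¹ * ((j.factorial : k))⁻¹
          * ((∏ i ∈ Finset.range j, (c - (i : k))) * (c - (j : k))))
      = (((j + 1 : ℕ) : k) * (((j+1 : ℕ) : k))⁻¹) * (((j.factorial : k))⁻¹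
          * ((∏ i ∈ Finset.range j, (c - (i : k))) * (c - (j : k)))) := by ring
    _ = ((j.factorial : k))⁻¹
          * ((∏ i ∈ Finset.range j, (c - (i : k))) * (c - (j : k))) := by
        rw [mul_inv_cancel₀ h2, one_mul]
    _ = (c - (j : k)) * ((j.factorial : k)⁻¹ * ∏ i ∈ Finset.range j, (c - (i : k))) := by ring

lemma scalarB {p : ℕ} (hp : 1 ≤ p) (c : k) :
    (c - ((p - 1 : ℕ) : k)) * (((p-1).factorial : k)⁻¹ * ∏ i ∈ Finset.range (p-1), (c - (i : k)))
      = c * (((p-1).factorial : k)⁻¹ * ∏ i ∈ Finset.range (p-1), (c - 1 - (i : k))) := by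
  obtain ⟨q, rfl⟩ : ∃ q, p = q + 1 := ⟨p - 1, by omega⟩
  simp only [Nat.add_sub_cancel]
  have h1 : (c - ((q : ℕ) : k)) * ∏ i ∈ Finset.range q, (c - (i : k))
      = ∏ i ∈ Finset.range (q+1), (c - (i : k)) := by rw [Finset.prod_range_succ]; ring
  have h2 : c * ∏ i ∈ Finset.range q, (c - 1 - (i : k))
      = ∏ i ∈ Finset.range (q+1), (c - (i : k)) := by
    rw [Finset.prod_range_succ']
    simp only [Nat.cast_zero, sub_zero, Nat.cast_add, Nat.cast_one]
    rw [mul_comm]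
    congr 1
    exact Finset.prod_congr rfl fun i _ => by push_cast; ring
  calc (c - ((q : ℕ) : k)) * (((q).factorial : k)⁻¹ * ∏ i ∈ Finset.range q, (c - (i : k)))
      = ((q).factorial : k)⁻¹ * ((c - ((q : ℕ) : k)) * ∏ i ∈ Finset.range q, (c - (i : k))) := by
        ring
    _ = ((q).factorial : k)⁻¹ * (c * ∏ i ∈ Finset.range q, (c - 1 - (i : k))) := by rw [h1, h2]
    _ = c * (((q).factorial : k)⁻¹ * ∏ i ∈ Finset.range q, (c - 1 - (i : k))) := by ring


/-- binomial-type coefficient -/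
def CbA (a : k) (r : ℕ) : k := (r.factorial : k)⁻¹ * ∏ i ∈ Finset.range r, (a - (i : k))

lemma keysum {S : Type*} [CommRing S] (Φ : k →+* S) {p : ℕ} (hp : p.Prime) [CharP k p]
    (c : k) (u w : S) :
    ∑ m ∈ Finset.range p, Φ (CbA c m) * (m • (w ^ (m-1) * (-(u * (w + 1)))))
      = Φ c * Φ (CbA (c-1) (p-1)) * (u * w ^ (p-1))
        - Φ c * u * ∑ m ∈ Finset.range p, Φ (CbA c m) * w ^ m := by
  have hterm : ∀ m ∈ Finset.range p,
      Φ (CbA c m) * (m • (w ^ (m-1) * (-(u * (w + 1)))))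
        = -(Φ ((m : k) * CbA c m) * (u * w ^ m) + Φ ((m : k) * CbA c m) * (u * w ^ (m-1))) := by
    intro m _
    cases m with
    | zero => simp
    | succ j =>
        rw [nsmul_eq_mul, show ((j + 1 : ℕ) : S) = Φ ((j + 1 : ℕ) : k) from (map_natCast Φ _).symm,
          map_mul, Nat.add_sub_cancel]
        push_cast
        ring
  rw [Finset.sum_congr rfl hterm]
  have hS3 : Φ c * u * ∑ m ∈ Finset.range p, Φ (CbA c m) * w ^ m
      = ∑ m ∈ Finset.range p, Φ (c * CbA c m) * (u * w ^ m) := by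
    rw [Finset.mul_sum]
    exact Finset.sum_congr rfl fun m _ => by rw [map_mul]; ring
  rw [hS3]
  obtain ⟨q, rfl⟩ : ∃ q, p = q + 1 := ⟨p - 1, by have := hp.one_lt; omega⟩
  simp only [Nat.add_sub_cancel]
  have hsplit : ∀ f h : ℕ → S, (∑ m ∈ Finset.range (q+1), -(f m + h m))
      = -((∑ m ∈ Finset.range (q+1), f m) + ∑ m ∈ Finset.range (q+1), h m) := by
    intro f h
    rw [← Finset.sum_add_distrib, ← Finset.sum_neg_distrib]
  rw [hsplit]
  have hS2 : ∑ m ∈ Finset.range (q+1), Φ ((m : k) * CbA c m) * (u * w ^ (m-1))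
      = ∑ i ∈ Finset.range q, Φ ((c - (i:k)) * CbA c i) * (u * w ^ i) := by
    rw [Finset.sum_range_succ']
    simp only [Nat.cast_zero, zero_mul, map_zero, add_zero, Nat.add_sub_cancel]
    refine Finset.sum_congr rfl fun i hi => ?_
    congr 2
    have := scalarA (k := k) hp c (j := i) (by simpa using Finset.mem_range.mp hi)
    simpa [CbA] using this
  rw [hS2, Finset.sum_range_succ (fun m => Φ ((m : k) * CbA c m) * (u * w ^ m)),
    Finset.sum_range_succ (fun m => Φ (c * CbA c m) * (u * w ^ m))]
  have hB : (c - ((q : ℕ) : k)) * CbA c q = c * CbA (c-1) q := by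
    have := scalarB (k := k) (p := q + 1) (by omega) c
    simpa [CbA] using this
  have hT : Φ c * Φ (CbA (c-1) q) * (u * w ^ q)
      = Φ (c * CbA c q) * (u * w ^ q) - Φ (((q:ℕ):k) * CbA c q) * (u * w ^ q) := by
    rw [← map_mul, ← hB, show (c - ((q : ℕ) : k)) * CbA c q
      = c * CbA c q - ((q:ℕ):k) * CbA c q from by ring, map_sub]
    ring
  rw [hT]
  have hzero : ∑ i ∈ Finset.range q, (Φ (c * CbA c i) * (u * w ^ i)
      - Φ ((i:k) * CbA c i) * (u * w ^ i) - Φ ((c - (i:k)) * CbA c i) * (u * w ^ i)) = 0 :=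
    Finset.sum_eq_zero fun i _ => by
      rw [show (c - (i:k)) * CbA c i = c * CbA c i - (i:k) * CbA c i from by ring, map_sub]
      ring
  rw [Finset.sum_sub_distrib, Finset.sum_sub_distrib] at hzero
  linear_combination hzero


lemma prod_erase_geom (i : Fin n) :
    (∏ j ∈ Finset.univ.erase i,
        (1 - PowerSeries.C (MvPolynomial.X j) * PowerSeries.X))
      = (PowerSeries.mk fun m => (MvPolynomial.X i : R) ^ m) *
          ∏ j, (1 - PowerSeries.C (MvPolynomial.X j) * PowerSeries.X) := by
  have h := Finset.mul_prod_erase Finset.univ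
    (fun j => 1 - PowerSeries.C (MvPolynomial.X j : R) * PowerSeries.X) (Finset.mem_univ i)
  calc (∏ j ∈ Finset.univ.erase i,
        (1 - PowerSeries.C (MvPolynomial.X j) * PowerSeries.X))
      = 1 * ∏ j ∈ Finset.univ.erase i,
          (1 - PowerSeries.C (MvPolynomial.X j) * PowerSeries.X) := (one_mul _).symm
    _ = ((PowerSeries.mk fun m => (MvPolynomial.X i : R) ^ m) *
          (1 - PowerSeries.C (MvPolynomial.X i) * PowerSeries.X)) *
          ∏ j ∈ Finset.univ.erase i,
            (1 - PowerSeries.C (MvPolynomial.X j) * PowerSeries.X) := by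
        rw [mul_comm (PowerSeries.mk fun m => (MvPolynomial.X i : R) ^ m), one_sub_mul_geom]
    _ = _ := by rw [mul_assoc, h]

lemma Dg (i₁ i₂ : Fin n) (hne : i₁ ≠ i₂) :
    Dser ((MvPolynomial.pderiv i₂ - MvPolynomial.pderiv i₁ : Derivation k R R))
        (∏ j, (1 - PowerSeries.C (MvPolynomial.X j) * PowerSeries.X))
      = (PowerSeries.mk fun m => (MvPolynomial.X i₁ : R) ^ m) *
          (∏ j, (1 - PowerSeries.C (MvPolynomial.X j) * PowerSeries.X)) * PowerSeries.X
        - (PowerSeries.mk fun m => (MvPolynomial.X i₂ : R) ^ m) *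
          (∏ j, (1 - PowerSeries.C (MvPolynomial.X j) * PowerSeries.X)) * PowerSeries.X := by
  classical
  set d : Derivation k R R := MvPolynomial.pderiv i₂ - MvPolynomial.pderiv i₁ with hd
  have key : ∀ j : Fin n,
      Dser d (1 - PowerSeries.C (MvPolynomial.X j) * PowerSeries.X)
        = -(PowerSeries.X * PowerSeries.C (d (MvPolynomial.X j))) := by
    intro j
    rw [map_sub, Derivation.map_one_eq_zero, (Dser d).leibniz, Dser_X, Dser_C]
    simp [smul_eq_mul]
  rw [derivation_map_prod]
  simp only [key]
  have hvan : ∀ j ∈ Finset.univ, j ∉ ({i₁, i₂} : Finset (Fin n)) →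
      (∏ j' ∈ Finset.univ.erase j,
        (1 - PowerSeries.C (MvPolynomial.X j') * PowerSeries.X)) *
        -(PowerSeries.X * PowerSeries.C (d (MvPolynomial.X j))) = 0 := by
    intro j _ hj
    simp only [Finset.mem_insert, Finset.mem_singleton, not_or] at hj
    have : d (MvPolynomial.X j) = 0 := by
      rw [hd, Derivation.sub_apply, MvPolynomial.pderiv_X_of_ne hj.2,
        MvPolynomial.pderiv_X_of_ne hj.1, sub_zero]
    rw [this, map_zero, mul_zero, neg_zero, mul_zero]
  rw [← Finset.sum_subset (Finset.subset_univ ({i₁, i₂} : Finset (Fin n))) hvan,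
    Finset.sum_pair hne]
  have hd1 : d (MvPolynomial.X i₁) = -1 := by
    rw [hd, Derivation.sub_apply, MvPolynomial.pderiv_X_of_ne hne,
      MvPolynomial.pderiv_X_self, zero_sub]
  have hd2 : d (MvPolynomial.X i₂) = 1 := by
    rw [hd, Derivation.sub_apply, MvPolynomial.pderiv_X_self,
      MvPolynomial.pderiv_X_of_ne hne.symm, sub_zero]
  rw [hd1, hd2, prod_erase_geom i₁, prod_erase_geom i₂, map_neg, map_one]
  ring

lemma part1 {p : ℕ} (hp : p.Prime) [CharP k p] (i₁ i₂ : Fin n) (hne : i₁ ≠ i₂) (c : k) :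
    (PowerSeries.mk fun l =>
        MvPolynomial.pderiv i₂ (PowerSeries.coeff l
          (∑ m ∈ Finset.range p, (MvPolynomial.C (CbA c m) : R) •
            ((∏ j, (1 - PowerSeries.C (MvPolynomial.X j) * PowerSeries.X)) - 1) ^ m))
        - MvPolynomial.pderiv i₁ (PowerSeries.coeff l
          (∑ m ∈ Finset.range p, (MvPolynomial.C (CbA c m) : R) •
            ((∏ j, (1 - PowerSeries.C (MvPolynomial.X j) * PowerSeries.X)) - 1) ^ m)))
      = (PowerSeries.X * PowerSeries.C (MvPolynomial.C c) *
            (PowerSeries.mk fun m => (MvPolynomial.X i₂ : R) ^ m)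
          - PowerSeries.X * PowerSeries.C (MvPolynomial.C c) *
            (PowerSeries.mk fun m => (MvPolynomial.X i₁ : R) ^ m)) *
          ((MvPolynomial.C (CbA (c-1) (p-1)) : R) •
            ((∏ j, (1 - PowerSeries.C (MvPolynomial.X j) * PowerSeries.X)) - 1) ^ (p-1))
        - (PowerSeries.X * PowerSeries.C (MvPolynomial.C c) *
            (PowerSeries.mk fun m => (MvPolynomial.X i₂ : R) ^ m)
          - PowerSeries.X * PowerSeries.C (MvPolynomial.C c) *
            (PowerSeries.mk fun m => (MvPolynomial.X i₁ : R) ^ m)) *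
          (∑ m ∈ Finset.range p, (MvPolynomial.C (CbA c m) : R) •
            ((∏ j, (1 - PowerSeries.C (MvPolynomial.X j) * PowerSeries.X)) - 1) ^ m) := by
  classical
  set d : Derivation k R R := MvPolynomial.pderiv i₂ - MvPolynomial.pderiv i₁ with hd
  set g : PowerSeries R := ∏ j, (1 - PowerSeries.C (MvPolynomial.X j) * PowerSeries.X) with hg
  set e₁ : PowerSeries R := PowerSeries.mk fun m => (MvPolynomial.X i₁ : R) ^ m with he₁
  set e₂ : PowerSeries R := PowerSeries.mk fun m => (MvPolynomial.X i₂ : R) ^ m with he₂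
  set F : PowerSeries R :=
    ∑ m ∈ Finset.range p, (MvPolynomial.C (CbA c m) : R) • (g - 1) ^ m with hF
  have hga : g - 1 + 1 = g := by ring
  have hL : (PowerSeries.mk fun l =>
      MvPolynomial.pderiv i₂ (PowerSeries.coeff l F)
        - MvPolynomial.pderiv i₁ (PowerSeries.coeff l F)) = Dser d F := by
    ext l
    rw [PowerSeries.coeff_mk, coeff_Dser, hd, Derivation.sub_apply]
  rw [hL]
  have hDg : Dser d g = e₁ * g * PowerSeries.X - e₂ * g * PowerSeries.X := by
    rw [hd, hg, he₁, he₂]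
    exact Dg i₁ i₂ hne
  have hDF : Dser d F = ∑ m ∈ Finset.range p,
      PowerSeries.C (MvPolynomial.C (CbA c m)) *
        (m • ((g - 1) ^ (m-1) * (e₁ * g * PowerSeries.X - e₂ * g * PowerSeries.X))) := by
    rw [hF, map_sum]
    refine Finset.sum_congr rfl fun m _ => ?_
    have hdC : d (MvPolynomial.C (CbA c m)) = 0 := by
      rw [hd, Derivation.sub_apply, MvPolynomial.pderiv_C, MvPolynomial.pderiv_C, sub_zero]
    rw [PowerSeries.smul_eq_C_mul, (Dser d).leibniz, Dser_C, hdC, map_zero, smul_zero,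
      add_zero, smul_eq_mul, Derivation.leibniz_pow, map_sub, Derivation.map_one_eq_zero,
      sub_zero, hDg, smul_eq_mul (α := PowerSeries R)]
  rw [hDF]
  have hKS := keysum (S := PowerSeries R)
    ((PowerSeries.C).comp (MvPolynomial.C : k →+* R)) hp c
    (PowerSeries.X * e₂ - PowerSeries.X * e₁) (g - 1)
  simp only [RingHom.coe_comp, Function.comp_apply] at hKS
  have hinner : ∀ m : ℕ,
      ((g - 1) ^ (m-1) * (e₁ * g * PowerSeries.X - e₂ * g * PowerSeries.X))
        = ((g - 1) ^ (m-1) *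
            (-((PowerSeries.X * e₂ - PowerSeries.X * e₁) * ((g - 1) + 1)))) := by
    intro m
    rw [hga]
    ring
  simp only [hinner]
  rw [hKS, hF]
  simp only [PowerSeries.smul_eq_C_mul]
  ring


end Main

end Stmt13Aux

/-- With `F(z) = ∑_{m=0}^{p-1} C(c,m)(g(z)-1)^m` and the
derivation `∂ = ∂_{y_2-y_1}` (with `∂x_2 = 1`, `∂x_1 = -1`, `∂x_j = 0`
otherwise) extended coefficient-wise to power series, one has
`∂F(z) = G(z) - (zc/(1-x_2 z) - zc/(1-x_1 z))·F(z)` where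
`G(z) = (zc/(1-x_2 z) - zc/(1-x_1 z))·C(c-1,p-1)·(g(z)-1)^{p-1}`; moreover the
coefficient of `z^l` in `G(z)` is zero in `A = k[x_1,…,x_n]/(x_1+⋯+x_n)` for
`0 ≤ l ≤ p`. -/
theorem stmt13 (p n : ℕ) (hp : p.Prime) (k : Type*) [Field k] [CharP k p]
    (hn : 2 ≤ n) (hpn : p ∣ n) (c : k) :
    let R := MvPolynomial (Fin n) k
    let I : Ideal R := Ideal.span {(∑ i, MvPolynomial.X i : R)}
    let x : Fin n → R := MvPolynomial.X
    let i₁ : Fin n := ⟨0, by omega⟩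
    let i₂ : Fin n := ⟨1, by omega⟩
    let D : PowerSeries R → PowerSeries R := fun f => PowerSeries.mk fun l =>
      MvPolynomial.pderiv i₂ (PowerSeries.coeff (R := R) l f)
        - MvPolynomial.pderiv i₁ (PowerSeries.coeff (R := R) l f)
    let geom : R → PowerSeries R := fun a => PowerSeries.mk fun l => a ^ l
    let g : PowerSeries R := ∏ j, (1 - PowerSeries.C (R := R) (x j) * PowerSeries.X)
    let Cb : k → ℕ → k := fun a r =>
      ((r.factorial : k)⁻¹) * ∏ i ∈ Finset.range r, (a - (i : k))
    let F : PowerSeries R :=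
      ∑ m ∈ Finset.range p, (MvPolynomial.C (Cb c m) : R) • (g - 1) ^ m
    let h : PowerSeries R :=
      PowerSeries.X * PowerSeries.C (R := R) (MvPolynomial.C c) * geom (x i₂)
        - PowerSeries.X * PowerSeries.C (R := R) (MvPolynomial.C c) * geom (x i₁)
    let G : PowerSeries R :=
      h * ((MvPolynomial.C (Cb (c - 1) (p - 1)) : R) • (g - 1) ^ (p - 1))
    D F = G - h * F ∧
      ∀ l : ℕ, l ≤ p → Ideal.Quotient.mk I (PowerSeries.coeff (R := R) l G) = 0 := by
  intro R I x i₁ i₂ D geom g Cb F h G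
  have hne : i₁ ≠ i₂ := by
    simp only [i₁, i₂, ne_eq, Fin.mk.injEq]
    omega
  constructor
  · exact Stmt13Aux.part1 hp i₁ i₂ hne c
  · intro l hl
    have h0 : PowerSeries.coeff (R := R) l G = 0 :=
      Stmt13Aux.part2 p hp.one_lt.le i₁ i₂ c _ l hl
    rw [h0, map_zero]
end
end

section
/- Under the substitution x_n = -1, x_j = 1, and x_i = 0 for i ≠ j, n (with 1 ≤ j ≤ n-1), the polynomial g(z) = ∏_{i=1}^n (1 - x_i z) specializes to 1 - z^2, and for an odd prime p the coefficient of z^p in F(z)/(1 - x_j z) specializes to ∑_{m=0}^{(p-1)/2} (-1)^m C(c,m), while for i ≠ j, i < n, the coefficient of z^p in F(z)/(1 - x_i z) specializes to 0. -/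
/-- Under the substitution `x_n = -1`, `x_j = 1`, `x_i = 0` for
`i ≠ j, n`, the polynomial `g(z) = ∏_i (1 - x_i z)` specializes to `1 - z²`;
the coefficient of `z^p` in `F(z)/(1 - x_j z)` specializes to
`∑_{m=0}^{(p-1)/2} (-1)^m C(c,m)`; and for `i ≠ j, i < n`, the coefficient of
`z^p` in `F(z)/(1 - x_i z)` specializes to `0`. -/
theorem stmt14 (p n : ℕ) (hp : p.Prime) (hodd : Odd p)
    (k : Type*) [Field k] [CharP k p] (hpn : p ∣ n) (c : k)
    (j : Fin n) (hj : (j : ℕ) < n - 1) :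
    let R := MvPolynomial (Fin n) k
    let x : Fin n → R := MvPolynomial.X
    let φ : R →+* k := (MvPolynomial.aeval (R := k) (fun i : Fin n =>
      if (i : ℕ) = n - 1 then (-1 : k) else if i = j then 1 else 0)).toRingHom
    let geom : R → PowerSeries R := fun a => PowerSeries.mk fun l => a ^ l
    let g : PowerSeries R := ∏ i, (1 - PowerSeries.C (R := R) (x i) * PowerSeries.X)
    let Cb : k → ℕ → k := fun a r =>
      ((r.factorial : k)⁻¹) * ∏ i ∈ Finset.range r, (a - (i : k))
    let F : PowerSeries R :=
      ∑ m ∈ Finset.range p, (MvPolynomial.C (Cb c m) : R) • (g - 1) ^ m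
    PowerSeries.map φ g = 1 - PowerSeries.X ^ 2 ∧
      PowerSeries.coeff (R := k) p (PowerSeries.map φ (F * geom (x j)))
        = ∑ m ∈ Finset.range ((p - 1) / 2 + 1), (-1 : k) ^ m * Cb c m ∧
      ∀ i : Fin n, i ≠ j → (i : ℕ) < n - 1 →
        PowerSeries.coeff (R := k) p (PowerSeries.map φ (F * geom (x i))) = 0 := by
  intro R x φ geom g Cb F
  have hn2 : 2 ≤ n := by omega
  set a : Fin n → k := fun i : Fin n =>
      if (i : ℕ) = n - 1 then (-1 : k) else if i = j then 1 else 0 with ha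
  have hφx : ∀ i, φ (x i) = a i := fun i => MvPolynomial.aeval_X _ i
  set ln : Fin n := ⟨n - 1, by omega⟩ with hln
  have haln : a ln = -1 := by simp [ha, hln]
  have haj : a j = 1 := by
    simp only [ha]
    rw [if_neg (by omega)]
    simp
  have hjln : j ≠ ln := by
    intro h; apply absurd (congrArg (Fin.val) h); simp [hln]; omega
  -- Part 1
  have hg : PowerSeries.map φ g = 1 - PowerSeries.X ^ 2 := by
    have : PowerSeries.map φ g
        = ∏ i, (1 - PowerSeries.C (R := k) (a i) * PowerSeries.X) := by
      simp only [g, map_prod, map_sub, map_one, map_mul, PowerSeries.map_C,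
        PowerSeries.map_X, hφx]
    rw [this, ← Finset.mul_prod_erase _ _ (Finset.mem_univ j),
      ← Finset.mul_prod_erase _ _ (Finset.mem_erase.mpr ⟨Ne.symm hjln, Finset.mem_univ ln⟩)]
    have hrest : ∏ i ∈ (Finset.univ.erase j).erase ln,
        (1 - PowerSeries.C (R := k) (a i) * PowerSeries.X) = 1 := by
      apply Finset.prod_eq_one
      intro i hi
      simp only [Finset.mem_erase] at hi
      have hai : a i = 0 := by
        have h1 : (i : ℕ) ≠ n - 1 := by
          intro h; exact hi.1 (Fin.ext (by simp [hln, h]))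
        simp [ha, h1, hi.2.1]
      simp [hai]
    rw [hrest, haln, haj]
    simp only [map_one, map_neg, one_mul]
    ring
  obtain ⟨t, ht⟩ := hodd
  have hF : PowerSeries.map φ F = ∑ m ∈ Finset.range p,
      PowerSeries.C (R := k) ((-1 : k) ^ m * Cb c m) * PowerSeries.X ^ (2 * m) := by
    simp only [F, map_sum]
    refine Finset.sum_congr rfl fun m _ => ?_
    rw [PowerSeries.smul_eq_C_mul, map_mul, PowerSeries.map_C, map_pow, map_sub,
      map_one, hg]
    have h1 : φ (MvPolynomial.C (Cb c m)) = Cb c m := by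
      show (MvPolynomial.aeval _) (MvPolynomial.C (Cb c m)) = Cb c m
      rw [MvPolynomial.aeval_C]
      exact Algebra.algebraMap_self_apply _
    have h2 : (1 - PowerSeries.X ^ 2 - 1 : PowerSeries k) = -(PowerSeries.X ^ 2) := by
      ring
    have h3 : ((-1 : PowerSeries k)) ^ m = PowerSeries.C (R := k) ((-1 : k) ^ m) := by
      rw [map_pow, map_neg, map_one]
    rw [h1, h2, neg_pow, ← pow_mul, h3]
    simp only [map_mul]
    ring
  have hgeom : ∀ i, PowerSeries.map φ (geom (x i))
      = PowerSeries.mk fun l => (a i) ^ l := by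
    intro i
    ext l
    simp [geom, hφx]
  refine ⟨hg, ?_, ?_⟩
  · rw [map_mul, hF, hgeom j, haj]
    have hmk : (PowerSeries.mk fun l => (1 : k) ^ l)
        = PowerSeries.mk fun _ => (1 : k) := by simp
    rw [hmk, Finset.sum_mul, map_sum]
    have hterm : ∀ m, (PowerSeries.coeff (R := k) p)
        (PowerSeries.C (R := k) ((-1 : k) ^ m * Cb c m) * PowerSeries.X ^ (2 * m)
          * PowerSeries.mk (fun _ : ℕ => (1 : k)))
        = if 2 * m ≤ p then (-1 : k) ^ m * Cb c m else 0 := by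
      intro m
      rw [mul_right_comm, PowerSeries.coeff_mul_X_pow']
      split
      · rw [PowerSeries.coeff_C_mul, PowerSeries.coeff_mk, mul_one]
      · rfl
    rw [Finset.sum_congr rfl fun m _ => hterm m]
    have hq : (p - 1) / 2 + 1 = t + 1 := by omega
    have hsub : Finset.range (t + 1) ⊆ Finset.range p :=
      Finset.range_subset_range.mpr (by omega)
    rw [hq, ← Finset.sum_subset hsub (fun m _ hnm => if_neg (by
      simp only [Finset.mem_range] at hnm; omega))]
    refine Finset.sum_congr rfl fun m hm => ?_
    simp only [Finset.mem_range] at hm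
    exact if_pos (by omega)
  · intro i hij hin
    have hai : a i = 0 := by
      simp only [ha]
      rw [if_neg (by omega), if_neg hij]
    rw [map_mul, hgeom i, hai]
    have hone : (PowerSeries.mk fun l => (0 : k) ^ l) = 1 := by
      ext l
      simp [PowerSeries.coeff_one, zero_pow_eq]
    rw [hone, mul_one, hF, map_sum]
    refine Finset.sum_eq_zero fun m hm => ?_
    rw [PowerSeries.coeff_C_mul, PowerSeries.coeff_X_pow, if_neg (by omega), mul_zero]
end

section
/- Let p be an odd prime, k an algebraically closed field of characteristic p with p | n, and c ∈ k with c ∉ {1, ..., (p-1)/2}. Then the elements f_1, ..., f_{n-1}, where f_i = [z^p](F(z)/(1 - x_i z)) with F(z) = ∑_{m=0}^{p-1} C(c,m)(g(z)-1)^m and g(z) = ∏_{j=1}^n (1 - x_j z), are linearly independent over k in A = k[x_1, ..., x_n]/(x_1 + ... + x_n). -/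
open Finset

lemma stmt15_pascal {k : Type*} [Field k] (c : k) (m : ℕ)
    (hf : (((m+1).factorial : k)) ≠ 0) :
    (((m+1).factorial : k))⁻¹ * ∏ i ∈ range (m+1), (c - (i:k)) =
      ((m.factorial : k))⁻¹ * ∏ i ∈ range m, (c - 1 - (i:k)) +
      (((m+1).factorial : k))⁻¹ * ∏ i ∈ range (m+1), (c - 1 - (i:k)) := by
  have hfe : (((m+1).factorial : k)) = ((m:k)+1) * (m.factorial : k) := by
    rw [Nat.factorial_succ]; push_cast; ring
  have hm : ((m.factorial : k)) ≠ 0 := by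
    intro h; apply hf; rw [hfe, h, mul_zero]
  have hm1 : ((m:k)+1) ≠ 0 := by
    intro h; apply hf; rw [hfe, h, zero_mul]
  have h1 : ∏ i ∈ range (m+1), (c - (i:k)) = c * ∏ i ∈ range m, (c - 1 - (i:k)) := by
    rw [Finset.prod_range_succ']
    push_cast
    rw [sub_zero, mul_comm]
    congr 1
    exact Finset.prod_congr rfl (fun i _ => by ring)
  have h2 : ∏ i ∈ range (m+1), (c - 1 - (i:k)) =
      (c - 1 - (m:k)) * ∏ i ∈ range m, (c - 1 - (i:k)) := by
    rw [Finset.prod_range_succ, mul_comm]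
  rw [h1, h2, hfe]
  field_simp
  ring

lemma stmt15_altsum {k : Type*} [Field k] (c : k) :
    ∀ M : ℕ, ((M.factorial : k) ≠ 0) →
    ∑ m ∈ range (M+1), (-1:k)^m * ((m.factorial : k)⁻¹ * ∏ i ∈ range m, (c - (i:k))) =
      (-1:k)^M * ((M.factorial : k)⁻¹ * ∏ i ∈ range M, (c - 1 - (i:k))) := by
  intro M
  induction M with
  | zero => intro _; simp [Nat.factorial]
  | succ M ih =>
    intro hf
    have hfe : (((M+1).factorial : k)) = ((M:k)+1) * (M.factorial : k) := by
      rw [Nat.factorial_succ]; push_cast; ring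
    have hM : ((M.factorial : k)) ≠ 0 := by
      intro h; apply hf; rw [hfe, h, mul_zero]
    rw [Finset.sum_range_succ, ih hM, stmt15_pascal c M hf]
    ring


set_option maxHeartbeats 2000000 in
/-- For an odd prime `p`, an algebraically closed field `k` of
characteristic `p` with `p ∣ n`, and `c ∈ k` with `c ∉ {1, …, (p-1)/2}`, the
elements `f_1, …, f_{n-1}`, where `f_i = [z^p](F(z)/(1 - x_i z))` with
`F(z) = ∑_{m=0}^{p-1} C(c,m)(g(z)-1)^m` and `g(z) = ∏_j (1 - x_j z)`, are
linearly independent over `k` in `A = k[x_1,…,x_n]/(x_1+⋯+x_n)`. -/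
theorem stmt15 (p n : ℕ) (hp : p.Prime) (hodd : Odd p)
    (k : Type*) [Field k] [IsAlgClosed k] [CharP k p]
    (hn : 0 < n) (hpn : p ∣ n) (c : k)
    (hc : ∀ j : ℕ, 1 ≤ j → j ≤ (p - 1) / 2 → c ≠ (j : k)) :
    let A := MvPolynomial (Fin n) k ⧸
      Ideal.span {(∑ i, MvPolynomial.X i : MvPolynomial (Fin n) k)}
    let x : Fin n → A := fun i => Ideal.Quotient.mk _ (MvPolynomial.X i)
    let geom : A → PowerSeries A := fun a => PowerSeries.mk fun l => a ^ l
    let g : PowerSeries A := ∏ j, (1 - PowerSeries.C (R := A) (x j) * PowerSeries.X)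
    let Cb : k → ℕ → k := fun a r =>
      ((r.factorial : k)⁻¹) * ∏ i ∈ Finset.range r, (a - (i : k))
    let F : PowerSeries A :=
      ∑ m ∈ Finset.range p, algebraMap k A (Cb c m) • (g - 1) ^ m
    let f : Fin n → A := fun i => PowerSeries.coeff (R := A) p (F * geom (x i))
    LinearIndependent k (fun i : Fin (n - 1) => f (Fin.castLE (by omega) i)) := by
  intro A x geom g Cb F f
  have hp3 : 3 ≤ p := by
    obtain ⟨t, ht⟩ := hodd
    have := hp.two_le
    omega
  have hpn' : p ≤ n := Nat.le_of_dvd hn hpn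
  have hn3 : 3 ≤ n := le_trans hp3 hpn'
  set M := (p - 1) / 2 with hM
  have hMp : 2 * M + 1 = p := by
    obtain ⟨t, ht⟩ := hodd
    omega
  have hfac : ∀ m : ℕ, m < p → ((m.factorial : k) ≠ 0) := by
    intro m hm h0
    have h1 := (CharP.cast_eq_zero_iff k p _).1 h0
    exact absurd ((Nat.Prime.dvd_factorial hp).1 h1) (by omega)
  -- α and its nonvanishing
  set αk : k := ∑ m ∈ Finset.range (M+1), (-1:k)^m * Cb c m with hαk
  have halpha : αk ≠ 0 := by
    have heq := stmt15_altsum c M (hfac M (by omega))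
    rw [hαk]
    simp only [Cb]
    rw [heq]
    apply mul_ne_zero
    · exact pow_ne_zero _ (by norm_num)
    apply mul_ne_zero
    · exact inv_ne_zero (hfac M (by omega))
    · rw [Finset.prod_ne_zero_iff]
      intro i hi
      rw [Finset.mem_range] at hi
      intro h0
      apply hc (i+1) (by omega) (by omega)
      push_cast
      linear_combination h0
  rw [Fintype.linearIndependent_iff]
  intro lam hlam j
  -- the distinguished indices
  set jn : Fin n := Fin.castLE (by omega) j with hjn
  set lastn : Fin n := ⟨n-1, by omega⟩ with hlastn
  have hjlast : jn ≠ lastn := by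
    intro h
    have h2 : (jn : ℕ) = (lastn : ℕ) := congrArg Fin.val h
    have h3 : (jn : ℕ) = (j : ℕ) := rfl
    have h4 : (lastn : ℕ) = n - 1 := rfl
    have h5 := j.isLt
    omega
  -- the substitution map
  set v : Fin n → Polynomial k := fun l =>
    if l = jn then Polynomial.X else if l = lastn then -Polynomial.X else 0 with hv
  set ψ : MvPolynomial (Fin n) k →ₐ[k] Polynomial k := MvPolynomial.aeval v with hψ
  have hψsum : ψ (∑ i, MvPolynomial.X i) = 0 := by
    rw [map_sum]
    simp only [hψ, MvPolynomial.aeval_X]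
    have hsplit : ∀ l : Fin n, v l =
        (if l = jn then Polynomial.X else 0) + (if l = lastn then -Polynomial.X else 0) := by
      intro l
      by_cases h1 : l = jn
      · subst h1
        rw [hv]
        simp only [if_pos rfl, if_neg hjlast, add_zero]
      · rw [hv]
        simp only [if_neg h1, zero_add]
    rw [Finset.sum_congr rfl (fun l _ => hsplit l), Finset.sum_add_distrib,
      Finset.sum_ite_eq' Finset.univ jn (fun _ => Polynomial.X),
      Finset.sum_ite_eq' Finset.univ lastn (fun _ => -Polynomial.X)]
    simp
  set Ψ : A →ₐ[k] Polynomial k := Ideal.Quotient.liftₐ _ ψ (by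
    intro aEl haEl
    rw [Ideal.mem_span_singleton] at haEl
    obtain ⟨t, rfl⟩ := haEl
    rw [map_mul, hψsum, zero_mul]) with hΨ
  have hΨx : ∀ l, Ψ (x l) = v l := by
    intro l
    rw [hΨ, Ideal.Quotient.liftₐ_apply]
    show Ideal.Quotient.lift _ _ _ (Ideal.Quotient.mk _ (MvPolynomial.X l)) = v l
    refine (Ideal.Quotient.lift_mk _ _ _).trans ?_
    simp [hψ]
  set Φ : PowerSeries A →+* PowerSeries (Polynomial k) := PowerSeries.map Ψ.toRingHom with hΦ
  have hfactor : ∀ l : Fin n, Φ (1 - PowerSeries.C (R := A) (x l) * PowerSeries.X) =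
      1 - PowerSeries.C (R := Polynomial k) (v l) * PowerSeries.X := by
    intro l
    rw [hΦ, map_sub, map_one, map_mul, PowerSeries.map_C, PowerSeries.map_X]
    rw [show Ψ.toRingHom (x l) = Ψ (x l) from rfl, hΨx]
  have hΦg : Φ g = 1 - PowerSeries.C (R := Polynomial k) (Polynomial.X^2) * PowerSeries.X^2 := by
    simp only [g]
    rw [map_prod]
    rw [Finset.prod_congr rfl (fun l _ => hfactor l)]
    rw [← Finset.prod_subset (Finset.subset_univ ({jn, lastn} : Finset (Fin n))) (by
      intro l _ hl
      simp only [Finset.mem_insert, Finset.mem_singleton, not_or] at hl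
      simp [hv, hl.1, hl.2])]
    rw [Finset.prod_pair hjlast]
    have h1 : v jn = Polynomial.X := by simp [hv]
    have h2 : v lastn = -Polynomial.X := by simp [hv, Ne.symm hjlast]
    rw [h1, h2, map_neg]
    have h3 : PowerSeries.C (R := Polynomial k) (Polynomial.X^2) =
        (PowerSeries.C (R := Polynomial k) Polynomial.X)^2 := by rw [map_pow]
    rw [h3]
    ring
  have hgm1 : Φ g - 1 = PowerSeries.C (R := Polynomial k) (-Polynomial.X^2) * PowerSeries.X^2 := by
    rw [hΦg, map_neg]
    ring
  have hΦF : ∀ N : ℕ, PowerSeries.coeff (R := Polynomial k) N (Φ F) =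
      ∑ m ∈ Finset.range p,
        (if N = 2*m then Polynomial.C ((-1:k)^m * Cb c m) * Polynomial.X^(2*m) else 0) := by
    intro N
    simp only [F]
    rw [map_sum, map_sum]
    apply Finset.sum_congr rfl
    intro m _
    rw [PowerSeries.smul_eq_C_mul, map_mul, map_pow, map_sub, map_one, hgm1,
      PowerSeries.map_C]
    have hcm : Ψ.toRingHom ((algebraMap k A) (Cb c m)) = Polynomial.C (Cb c m) := by
      rw [show Ψ.toRingHom ((algebraMap k A) (Cb c m)) = Ψ ((algebraMap k A) (Cb c m)) from rfl,
        AlgHom.commutes]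
      rw [Polynomial.algebraMap_eq]
    rw [hcm, mul_pow, ← map_pow, ← pow_mul, ← mul_assoc, ← map_mul,
      PowerSeries.coeff_C_mul, PowerSeries.coeff_X_pow, mul_ite, mul_one, mul_zero]
    split_ifs with h
    · rw [neg_pow]
      simp only [map_mul, map_pow, map_neg, map_one]
      ring
    · rfl
  have hΦgeom : ∀ b : A, Φ (geom b) = PowerSeries.mk (fun l => (Ψ b)^l) := by
    intro b
    ext N : 1
    simp only [geom, hΦ]
    rw [PowerSeries.coeff_map, PowerSeries.coeff_mk, PowerSeries.coeff_mk]
    exact map_pow Ψ.toRingHom b N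
  have hcomm : ∀ S : PowerSeries A,
      Ψ (PowerSeries.coeff (R := A) p S) = PowerSeries.coeff (R := Polynomial k) p (Φ S) :=
    fun S => (PowerSeries.coeff_map Ψ.toRingHom p S).symm
  have key : ∀ i : Fin (n-1),
      (Ψ (f (Fin.castLE (by omega : n - 1 ≤ n) i))).coeff p = if i = j then αk else 0 := by
    intro i
    simp only [f]
    rw [hcomm, map_mul, hΦgeom]
    by_cases hij : i = j
    · subst hij
      rw [if_pos rfl]
      have hxj : Ψ (x (Fin.castLE (by omega : n-1 ≤ n) i)) = Polynomial.X := by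
        rw [hΨx]
        have he : Fin.castLE (by omega : n-1 ≤ n) i = jn := rfl
        rw [he]
        simp [hv]
      rw [hxj]
      rw [PowerSeries.coeff_mul, Finset.Nat.sum_antidiagonal_eq_sum_range_succ_mk]
      have hterm : ∀ u ∈ Finset.range (p+1),
          PowerSeries.coeff (R := Polynomial k) u (Φ F) *
            PowerSeries.coeff (R := Polynomial k) (p - u) (PowerSeries.mk fun l => (Polynomial.X : Polynomial k)^l)
          = ∑ m ∈ Finset.range p, (if u = 2*m then
              Polynomial.C ((-1:k)^m * Cb c m) * Polynomial.X^(2*m) * Polynomial.X^(p-u) else 0) := by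
        intro u _
        rw [hΦF u, PowerSeries.coeff_mk, Finset.sum_mul]
        apply Finset.sum_congr rfl
        intro m _
        rw [ite_mul, zero_mul]
      rw [Finset.sum_congr rfl hterm, Finset.sum_comm]
      have hinner : ∀ m ∈ Finset.range p,
          (∑ u ∈ Finset.range (p+1), if u = 2*m then
              Polynomial.C ((-1:k)^m * Cb c m) * Polynomial.X^(2*m) * Polynomial.X^(p-u) else 0)
          = (if 2*m < p+1 then
              Polynomial.C ((-1:k)^m * Cb c m) * Polynomial.X^(2*m) * Polynomial.X^(p-2*m) else 0) := by
        intro m _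
        rw [Finset.sum_ite_eq' (Finset.range (p+1)) (2*m)
          (fun u => Polynomial.C ((-1:k)^m * Cb c m) * Polynomial.X^(2*m) * Polynomial.X^(p-u))]
        simp [Finset.mem_range]
      rw [Finset.sum_congr rfl hinner]
      rw [← Finset.sum_subset (Finset.range_subset_range.2 (by omega : M+1 ≤ p)) (by
        intro u hu hnu
        rw [Finset.mem_range] at hnu
        rw [if_neg (by omega)])]
      rw [Polynomial.finset_sum_coeff]
      have hcoef : ∀ m ∈ Finset.range (M+1),
          (if 2*m < p+1 then
              Polynomial.C ((-1:k)^m * Cb c m) * Polynomial.X^(2*m) * Polynomial.X^(p-2*m)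
            else 0).coeff p = (-1:k)^m * Cb c m := by
        intro m hm
        rw [Finset.mem_range] at hm
        rw [if_pos (by omega), mul_assoc, ← pow_add,
          show 2*m + (p - 2*m) = p by omega,
          Polynomial.coeff_C_mul, Polynomial.coeff_X_pow, if_pos rfl, mul_one]
      rw [Finset.sum_congr rfl hcoef, hαk]
    · rw [if_neg hij]
      have hxi : Ψ (x (Fin.castLE (by omega : n-1 ≤ n) i)) = 0 := by
        rw [hΨx]
        have h1 : Fin.castLE (by omega : n-1 ≤ n) i ≠ jn := by
          intro h
          have hh := congrArg Fin.val h
          apply hij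
          apply Fin.ext
          exact hh
        have h2 : Fin.castLE (by omega : n-1 ≤ n) i ≠ lastn := by
          intro h
          have hh := congrArg Fin.val h
          have h3 : ((Fin.castLE (by omega : n-1 ≤ n) i) : ℕ) = (i : ℕ) := rfl
          have h4 : (lastn : ℕ) = n - 1 := rfl
          have h5 := i.isLt
          omega
        simp [hv, h1, h2]
      rw [hxi]
      have hone : PowerSeries.mk (fun l => (0:Polynomial k)^l) = 1 := by
        ext N : 1
        rw [PowerSeries.coeff_mk, PowerSeries.coeff_one]
        by_cases hN : N = 0 <;> simp [hN]
      rw [hone, mul_one, hΦF p]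
      rw [Finset.sum_congr rfl (fun m _ => if_neg (by omega : ¬ p = 2*m)),
        Finset.sum_const_zero, Polynomial.coeff_zero]
  have h0 : (∑ i : Fin (n-1), lam i • (Ψ (f (Fin.castLE (by omega : n-1 ≤ n) i))).coeff p) = 0 := by
    have h00 := congrArg (fun aEl : A => (Ψ aEl).coeff p) hlam
    simpa [map_sum, map_smul, Polynomial.coeff_smul, Polynomial.finset_sum_coeff] using h00
  rw [Finset.sum_congr rfl (fun i _ => by rw [key i])] at h0
  have h2 : ∀ i : Fin (n-1), (lam i • (if i = j then αk else 0) : k) = if i = j then lam i * αk else 0 := by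
    intro i
    split_ifs <;> simp [smul_eq_mul]
  rw [Finset.sum_congr rfl (fun i _ => h2 i),
    Finset.sum_ite_eq' Finset.univ j (fun i => lam i * αk)] at h0
  simp only [Finset.mem_univ, if_true] at h0
  exact (mul_eq_zero.1 h0).resolve_right halpha
end
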